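/- Let A = diag(G₁,...,G_m,[1]) ∈ ℝ^{n×n} (possibly without the block [1]) be orthogonal with rotation blocks G_j having cosines 0 < c₁ < ⋯ < c_m < 1, and let v₀ be a unit vector with d(A,v₀) ≥ 2 and nonzero first block v₀^{(1)} ≠ 0. Then the ACI(1) sequence {v_k} converges to a single limit vector; in fact ‖v_{k+1} − v_k‖ ≤ √3 · ρ^k for some 0 < ρ < 1 and all sufficiently large k, so Σ_k ‖v_{k+1} − v_k‖ < ∞. -/

import Mathlib

open Polynomial Filter Topology Matrix

noncomputable section

def mulv {ι : Type*} [Fintype ι] (A : Matrix ι ι ℝ) (v : EuclideanSpace ℝ ι) :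
    EuclideanSpace ℝ ι :=
  (WithLp.equiv 2 (ι → ℝ)).symm (A.mulVec ((WithLp.equiv 2 (ι → ℝ)) v))

def Krylov {ι : Type*} [Fintype ι] [DecidableEq ι] (A : Matrix ι ι ℝ) (s : ℕ) (v : EuclideanSpace ℝ ι) :
    Submodule ℝ (EuclideanSpace ℝ ι) :=
  Submodule.span ℝ (Set.range fun i : Fin s => mulv (A ^ (i : ℕ)) v)

def IsArnoldiProj {ι : Type*} [Fintype ι] [DecidableEq ι] (A : Matrix ι ι ℝ) (s : ℕ)
    (v w : EuclideanSpace ℝ ι) : Prop :=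
  w - mulv (A ^ s) v ∈ Krylov A s v ∧ ∀ u ∈ Krylov A s v, inner ℝ w u = (0 : ℝ)

def vgrade {ι : Type*} [Fintype ι] [DecidableEq ι] (A : Matrix ι ι ℝ)
    (v : EuclideanSpace ℝ ι) : ℕ :=
  sInf {d | ∃ p : ℝ[X], p ≠ 0 ∧ p.natDegree = d ∧ mulv (aeval A p) v = 0}

def dmin {ι : Type*} [Fintype ι] [DecidableEq ι] (A : Matrix ι ι ℝ) : ℕ :=
  (minpoly ℝ A).natDegree

def Phi {ι : Type*} [Fintype ι] [DecidableEq ι] (A : Matrix ι ι ℝ) (s : ℕ) : ℝ :=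
  sSup {r | ∃ v : EuclideanSpace ℝ ι, ‖v‖ = 1 ∧
    r = sInf {t | ∃ q : ℝ[X], q.Monic ∧ q.natDegree = s ∧ t = ‖mulv (aeval A q) v‖}}

def opNorm {ι : Type*} [Fintype ι] [DecidableEq ι] (A : Matrix ι ι ℝ) : ℝ :=
  ‖Matrix.toEuclideanCLM (𝕜 := ℝ) A‖

def blockRot (m e : ℕ) (c s : Fin m → ℝ) :
    Matrix ((Fin m × Fin 2) ⊕ Fin e) ((Fin m × Fin 2) ⊕ Fin e) ℝ :=
  fun i j => match i, j with
  | Sum.inl (a, x), Sum.inl (b, y) =>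
      if a = b then
        (if x = y then c a else if (x : ℕ) = 0 then s a else -(s a))
      else 0
  | Sum.inr i, Sum.inr j => if i = j then 1 else 0
  | _, _ => 0

namespace ACIAux
variable {m e : ℕ}

def Pb (u : EuclideanSpace ℝ ((Fin m × Fin 2) ⊕ Fin e)) (j : Fin m) : ℝ :=
  u (Sum.inl (j,0)) ^ 2 + u (Sum.inl (j,1)) ^ 2

def Eb (u : EuclideanSpace ℝ ((Fin m × Fin 2) ⊕ Fin e)) : ℝ :=
  ∑ i : Fin e, u (Sum.inr i) ^ 2

def Sb (j0 : Fin m) (u : EuclideanSpace ℝ ((Fin m × Fin 2) ⊕ Fin e)) : ℝ :=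
  (∑ j ∈ Finset.univ.erase j0, Pb u j) + Eb u

lemma Pb_nonneg (u : EuclideanSpace ℝ ((Fin m × Fin 2) ⊕ Fin e)) (j : Fin m) : 0 ≤ Pb u j := by
  unfold Pb; positivity

lemma Eb_nonneg (u : EuclideanSpace ℝ ((Fin m × Fin 2) ⊕ Fin e)) : 0 ≤ Eb u := by
  unfold Eb; positivity

lemma Sb_nonneg (j0 : Fin m) (u : EuclideanSpace ℝ ((Fin m × Fin 2) ⊕ Fin e)) : 0 ≤ Sb j0 u := by
  unfold Sb
  have h1 : (0:ℝ) ≤ ∑ j ∈ Finset.univ.erase j0, Pb u j :=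
    Finset.sum_nonneg fun j _ => Pb_nonneg u j
  have h2 := Eb_nonneg u
  linarith

lemma sum_split {M : Type*} [AddCommMonoid M] (f : (Fin m × Fin 2) ⊕ Fin e → M) :
    ∑ i, f i = (∑ j : Fin m, (f (Sum.inl (j,0)) + f (Sum.inl (j,1)))) + ∑ i : Fin e, f (Sum.inr i) := by
  rw [Fintype.sum_sum_type, Fintype.sum_prod_type]
  simp [Fin.sum_univ_two]

lemma sum_Pb_eq (j0 : Fin m) (u : EuclideanSpace ℝ ((Fin m × Fin 2) ⊕ Fin e)) :
    ∑ j, Pb u j = Pb u j0 + ∑ j ∈ Finset.univ.erase j0, Pb u j :=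
  (Finset.add_sum_erase _ _ (Finset.mem_univ j0)).symm

lemma norm_sq_eq (j0 : Fin m) (u : EuclideanSpace ℝ ((Fin m × Fin 2) ⊕ Fin e)) :
    ‖u‖ ^ 2 = Pb u j0 + Sb j0 u := by
  have h : ‖u‖ ^ 2 = ∑ i, u i ^ 2 := by
    rw [EuclideanSpace.norm_eq, Real.sq_sqrt (by positivity)]
    simp [sq_abs]
  rw [h, sum_split (fun i => u i ^ 2)]
  rw [show (∑ j : Fin m, (u (Sum.inl (j,0)) ^ 2 + u (Sum.inl (j,1)) ^ 2)) = ∑ j, Pb u j from rfl]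
  rw [sum_Pb_eq j0]
  unfold Sb Eb
  ring

lemma mulv_apply {ι : Type*} [Fintype ι] (A : Matrix ι ι ℝ) (v : EuclideanSpace ℝ ι) (i : ι) :
    mulv A v i = ∑ j, A i j * v j := by
  simp [mulv, Matrix.mulVec, dotProduct]

lemma br0 (c s : Fin m → ℝ) (u : EuclideanSpace ℝ ((Fin m × Fin 2) ⊕ Fin e)) (j : Fin m) :
    mulv (blockRot m e c s) u (Sum.inl (j,0)) = c j * u (Sum.inl (j,0)) + s j * u (Sum.inl (j,1)) := by
  rw [mulv_apply, sum_split]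
  rw [Finset.sum_eq_single j (by intro b _ hb; simp [blockRot, (Ne.symm hb)]) (by simp)]
  simp [blockRot]

lemma br1 (c s : Fin m → ℝ) (u : EuclideanSpace ℝ ((Fin m × Fin 2) ⊕ Fin e)) (j : Fin m) :
    mulv (blockRot m e c s) u (Sum.inl (j,1)) = -(s j) * u (Sum.inl (j,0)) + c j * u (Sum.inl (j,1)) := by
  rw [mulv_apply, sum_split]
  rw [Finset.sum_eq_single j (by intro b _ hb; simp [blockRot, (Ne.symm hb)]) (by simp)]
  simp [blockRot]

lemma bre (c s : Fin m → ℝ) (u : EuclideanSpace ℝ ((Fin m × Fin 2) ⊕ Fin e)) (i : Fin e) :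
    mulv (blockRot m e c s) u (Sum.inr i) = u (Sum.inr i) := by
  rw [mulv_apply, sum_split]
  rw [Finset.sum_eq_single i (by intro b _ hb; simp [blockRot, (Ne.symm hb)]) (by simp)]
  simp [blockRot]

lemma brT0 (c s : Fin m → ℝ) (u : EuclideanSpace ℝ ((Fin m × Fin 2) ⊕ Fin e)) (j : Fin m) :
    mulv (blockRot m e c s)ᵀ u (Sum.inl (j,0)) = c j * u (Sum.inl (j,0)) - s j * u (Sum.inl (j,1)) := by
  rw [mulv_apply, sum_split]
  rw [Finset.sum_eq_single j (by intro b _ hb; simp [blockRot, Matrix.transpose_apply, hb]) (by simp)]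
  simp [blockRot]
  ring

lemma brT1 (c s : Fin m → ℝ) (u : EuclideanSpace ℝ ((Fin m × Fin 2) ⊕ Fin e)) (j : Fin m) :
    mulv (blockRot m e c s)ᵀ u (Sum.inl (j,1)) = s j * u (Sum.inl (j,0)) + c j * u (Sum.inl (j,1)) := by
  rw [mulv_apply, sum_split]
  rw [Finset.sum_eq_single j (by intro b _ hb; simp [blockRot, Matrix.transpose_apply, hb]) (by simp)]
  simp [blockRot]

lemma brTe (c s : Fin m → ℝ) (u : EuclideanSpace ℝ ((Fin m × Fin 2) ⊕ Fin e)) (i : Fin e) :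
    mulv (blockRot m e c s)ᵀ u (Sum.inr i) = u (Sum.inr i) := by
  rw [mulv_apply, sum_split]
  rw [Finset.sum_eq_single i (by intro b _ hb; simp [blockRot, Matrix.transpose_apply, hb]) (by simp)]
  simp [blockRot]

lemma inner_formula (c s : Fin m → ℝ) (u : EuclideanSpace ℝ ((Fin m × Fin 2) ⊕ Fin e)) :
    (inner ℝ u (mulv (blockRot m e c s) u) : ℝ) = (∑ j, c j * Pb u j) + Eb u := by
  have h : (inner ℝ u (mulv (blockRot m e c s) u) : ℝ) = ∑ i, u i * mulv (blockRot m e c s) u i := by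
    simp [PiLp.inner_apply, RCLike.inner_apply, mul_comm]
  rw [h, sum_split (fun i => u i * mulv (blockRot m e c s) u i)]
  congr 1
  · refine Finset.sum_congr rfl fun j _ => ?_
    rw [br0, br1]
    unfold Pb
    ring
  · refine Finset.sum_congr rfl fun i _ => ?_
    rw [bre]
    ring

lemma rayleigh (c : Fin m → ℝ) (j0 : Fin m)
    (hle : ∀ j, c j0 ≤ c j) (h0 : 0 < c j0) (h1 : ∀ j, c j ≤ 1)
    (s : Fin m → ℝ) (u : EuclideanSpace ℝ ((Fin m × Fin 2) ⊕ Fin e)) (hu : ‖u‖ = 1) :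
    c j0 ≤ (inner ℝ u (mulv (blockRot m e c s) u) : ℝ) ∧
    (inner ℝ u (mulv (blockRot m e c s) u) : ℝ) ≤ 1 ∧
    (inner ℝ u (mulv (blockRot m e c s) u) : ℝ) - c j0 ≤ Sb j0 u := by
  have hi := inner_formula (e := e) c s u
  have hn : Pb u j0 + Sb j0 u = 1 := by rw [← norm_sq_eq j0 u, hu]; norm_num
  have hsplit : (∑ j, c j * Pb u j) = c j0 * Pb u j0 + ∑ j ∈ Finset.univ.erase j0, c j * Pb u j :=
    (Finset.add_sum_erase _ _ (Finset.mem_univ j0)).symm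
  have hPn : ∀ j, 0 ≤ Pb u j := Pb_nonneg u
  have hEn := Eb_nonneg u
  have hSn : Sb j0 u = (∑ j ∈ Finset.univ.erase j0, Pb u j) + Eb u := rfl
  have hup : ∑ j ∈ Finset.univ.erase j0, c j * Pb u j ≤ ∑ j ∈ Finset.univ.erase j0, Pb u j :=
    Finset.sum_le_sum fun j _ => by nlinarith [hPn j, h1 j, hle j]
  have hlo : ∑ j ∈ Finset.univ.erase j0, c j0 * Pb u j ≤ ∑ j ∈ Finset.univ.erase j0, c j * Pb u j :=
    Finset.sum_le_sum fun j _ => by nlinarith [hPn j, hle j]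
  have hlosum : c j0 * ∑ j ∈ Finset.univ.erase j0, Pb u j = ∑ j ∈ Finset.univ.erase j0, c j0 * Pb u j :=
    Finset.mul_sum _ _ _
  have hn' : Pb u j0 + ((∑ j ∈ Finset.univ.erase j0, Pb u j) + Eb u) = 1 := by
    rw [← hSn]; exact hn
  have hmul : c j0 * Pb u j0 + c j0 * (∑ j ∈ Finset.univ.erase j0, Pb u j) + c j0 * Eb u = c j0 := by
    linear_combination (c j0) * hn'
  have hc1le : c j0 ≤ 1 := h1 j0
  have hcE : c j0 * Eb u ≤ Eb u := by nlinarith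
  have hSnn : 0 ≤ (∑ j ∈ Finset.univ.erase j0, Pb u j) :=
    Finset.sum_nonneg fun j _ => hPn j
  have hcS : 0 ≤ c j0 * ((∑ j ∈ Finset.univ.erase j0, Pb u j) + Eb u) := by positivity
  refine ⟨?_, ?_, ?_⟩
  · rw [hi, hsplit]
    linarith [hlosum ▸ hlo, hmul, hcE]
  · rw [hi, hsplit]
    nlinarith [hPn j0, hEn, hn', hup, h1 j0, hle j0, h0]
  · rw [hi, hsplit, hSn]
    nlinarith [hup, hcS, hmul, hcE, hPn j0]

lemma Sb_sub_le (j0 : Fin m) (u w : EuclideanSpace ℝ ((Fin m × Fin 2) ⊕ Fin e)) :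
    Sb j0 (u - w) ≤ 2 * Sb j0 u + 2 * Sb j0 w := by
  have hP : ∀ j, Pb (u - w) j ≤ 2 * Pb u j + 2 * Pb w j := by
    intro j
    unfold Pb
    have h1 : (u - w) (Sum.inl (j,0)) = u (Sum.inl (j,0)) - w (Sum.inl (j,0)) := rfl
    have h2 : (u - w) (Sum.inl (j,1)) = u (Sum.inl (j,1)) - w (Sum.inl (j,1)) := rfl
    rw [h1, h2]
    nlinarith [sq_nonneg (u (Sum.inl (j,0)) + w (Sum.inl (j,0))), sq_nonneg (u (Sum.inl (j,1)) + w (Sum.inl (j,1)))]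
  have hE : Eb (u - w) ≤ 2 * Eb u + 2 * Eb w := by
    unfold Eb
    calc ∑ i : Fin e, (u - w) (Sum.inr i) ^ 2
        ≤ ∑ i : Fin e, (2 * u (Sum.inr i) ^ 2 + 2 * w (Sum.inr i) ^ 2) := by
          refine Finset.sum_le_sum fun i _ => ?_
          have h1 : (u - w) (Sum.inr i) = u (Sum.inr i) - w (Sum.inr i) := rfl
          rw [h1]; nlinarith [sq_nonneg (u (Sum.inr i) + w (Sum.inr i))]
      _ = 2 * ∑ i : Fin e, u (Sum.inr i) ^ 2 + 2 * ∑ i : Fin e, w (Sum.inr i) ^ 2 := by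
          rw [Finset.sum_add_distrib, ← Finset.mul_sum, ← Finset.mul_sum]
  have hPs : ∑ j ∈ Finset.univ.erase j0, Pb (u - w) j
      ≤ ∑ j ∈ Finset.univ.erase j0, (2 * Pb u j + 2 * Pb w j) :=
    Finset.sum_le_sum fun j _ => hP j
  have hPs2 : ∑ j ∈ Finset.univ.erase j0, (2 * Pb u j + 2 * Pb w j)
      = 2 * ∑ j ∈ Finset.univ.erase j0, Pb u j + 2 * ∑ j ∈ Finset.univ.erase j0, Pb w j := by
    rw [Finset.sum_add_distrib, ← Finset.mul_sum, ← Finset.mul_sum]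
  unfold Sb
  linarith

lemma Pb_smul (u : EuclideanSpace ℝ ((Fin m × Fin 2) ⊕ Fin e)) (r : ℝ) (j : Fin m) :
    Pb (r • u) j = r^2 * Pb u j := by
  unfold Pb
  have h0 : (r • u) (Sum.inl (j,0)) = r * u (Sum.inl (j,0)) := rfl
  have h1 : (r • u) (Sum.inl (j,1)) = r * u (Sum.inl (j,1)) := rfl
  rw [h0, h1]; ring

lemma Eb_smul (u : EuclideanSpace ℝ ((Fin m × Fin 2) ⊕ Fin e)) (r : ℝ) :
    Eb (r • u) = r^2 * Eb u := by
  unfold Eb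
  rw [Finset.mul_sum]
  refine Finset.sum_congr rfl fun i _ => ?_
  have h : (r • u) (Sum.inr i) = r * u (Sum.inr i) := rfl
  rw [h]; ring

lemma Sb_smul (j0 : Fin m) (u : EuclideanSpace ℝ ((Fin m × Fin 2) ⊕ Fin e)) (r : ℝ) :
    Sb j0 (r • u) = r^2 * Sb j0 u := by
  unfold Sb
  rw [Eb_smul, mul_add, Finset.mul_sum]
  congr 1
  exact Finset.sum_congr rfl fun j _ => Pb_smul u r j

end ACIAux

set_option maxHeartbeats 4000000

theorem aci1_orthogonal_converges {m e : ℕ} (hm : 0 < m) (he : e ≤ 1)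
    (c s : Fin m → ℝ) (hcs : ∀ j, c j ^ 2 + s j ^ 2 = 1) (hsne : ∀ j, s j ≠ 0)
    (hc0 : ∀ j, 0 < c j) (hc1 : ∀ j, c j < 1) (hmono : StrictMono c)
    (A : Matrix ((Fin m × Fin 2) ⊕ Fin e) ((Fin m × Fin 2) ⊕ Fin e) ℝ)
    (hA : A = blockRot m e c s)
    (v wt w vt : ℕ → EuclideanSpace ℝ ((Fin m × Fin 2) ⊕ Fin e)) (α β : ℕ → ℝ)
    (hv0 : ‖v 0‖ = 1) (hg : 2 ≤ vgrade A (v 0))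
    (hblock1 : ∃ i : Fin 2,
      (WithLp.equiv 2 (((Fin m × Fin 2) ⊕ Fin e) → ℝ)) (v 0) (Sum.inl (⟨0, hm⟩, i)) ≠ 0)
    (hα : ∀ k, α k = (inner ℝ (v k) (mulv A (v k)) : ℝ))
    (hwt : ∀ k, wt k = mulv A (v k) - α k • v k)
    (hw : ∀ k, w k = ‖wt k‖⁻¹ • wt k)
    (hβ : ∀ k, β k = (inner ℝ (w k) (mulv A (w k)) : ℝ))
    (hvt : ∀ k, vt (k + 1) = mulv Aᵀ (w k) - β k • w k)
    (hv : ∀ k, v (k + 1) = ‖vt (k + 1)‖⁻¹ • vt (k + 1)) :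
    (∃ vstar : EuclideanSpace ℝ ((Fin m × Fin 2) ⊕ Fin e), Tendsto v atTop (𝓝 vstar)) ∧
    (∃ ρ : ℝ, 0 < ρ ∧ ρ < 1 ∧ ∃ K : ℕ, ∀ k ≥ K, ‖v (k + 1) - v k‖ ≤ Real.sqrt 3 * ρ ^ k) ∧
    Summable (fun k => ‖v (k + 1) - v k‖) := by
  classical
  subst hA
  set j0 : Fin m := ⟨0, hm⟩ with hj0
  -- basic facts about c and s
  have hj0lt : ∀ j : Fin m, j ≠ j0 → j0 < j := by
    intro j hj
    have hne : (j : ℕ) ≠ 0 := by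
      intro h
      exact hj (Fin.ext (by simp [hj0, h]))
    exact Fin.lt_def.mpr (by simpa [hj0] using Nat.pos_of_ne_zero hne)
  have hlt : ∀ j : Fin m, j ≠ j0 → c j0 < c j := fun j hj => hmono (hj0lt j hj)
  have hcle : ∀ j, c j0 ≤ c j := by
    intro j
    rcases eq_or_ne j j0 with h | h
    · rw [h]
    · exact le_of_lt (hlt j h)
  have hcle1 : ∀ j, c j ≤ 1 := fun j => le_of_lt (hc1 j)
  have hs2pos : ∀ j, 0 < s j ^ 2 := by
    intro j
    have := hsne j
    positivity
  have hs2le1 : ∀ j, s j ^ 2 ≤ 1 := fun j => by nlinarith [hcs j, sq_nonneg (c j)]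
  have hc00 : 0 < c j0 := hc0 j0
  have hc01 : c j0 < 1 := hc1 j0
  -- the spectral gap and contraction factor q
  set gap : ℝ := Finset.univ.inf' ⟨j0, Finset.mem_univ j0⟩
      (fun j => if j = j0 then 1 - c j0 else c j - c j0) with hgapdef
  have hgap_pos : 0 < gap := by
    rw [hgapdef]; refine (Finset.lt_inf'_iff _).mpr ?_
    intro j _
    by_cases h : j = j0
    · rw [if_pos h]; linarith
    · rw [if_neg h]; linarith [hlt j h]
  have hgap_le : ∀ j, j ≠ j0 → gap ≤ c j - c j0 := by
    intro j h
    have := Finset.inf'_le (fun j => if j = j0 then 1 - c j0 else c j - c j0) (Finset.mem_univ j)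
    rw [if_neg h] at this
    exact le_trans this (le_refl _)
  have hgap_le1 : gap ≤ 1 - c j0 := by
    have := Finset.inf'_le (fun j => if j = j0 then 1 - c j0 else c j - c j0) (Finset.mem_univ j0)
    rw [if_pos rfl] at this
    exact this
  set q : ℝ := 1 - c j0 * gap with hqdef
  have hq0 : 0 < q := by nlinarith
  have hq1 : q < 1 := by nlinarith
  have hqle1 : q ≤ 1 := le_of_lt hq1
  -- key contraction inequalities
  have hkey : ∀ t, c j0 ≤ t → t ≤ 1 → ∀ j, j ≠ j0 →
      (c j - t)^2 + s j^2 ≤ q * ((c j0 - t)^2 + s j0^2) := by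
    intro t ht1 ht2 j hj
    have hid : (c j0 - t)^2 + s j0^2 - ((c j - t)^2 + s j^2) = 2*t*(c j - c j0) := by
      linear_combination hcs j0 - hcs j
    have hg2 : (c j0 - t)^2 + s j0^2 ≤ 2 := by nlinarith [hs2le1 j0]
    have hgap' := hgap_le j hj
    have h1 : c j0 * gap * ((c j0 - t)^2 + s j0^2) ≤ c j0 * (c j - c j0) * 2 := by
      nlinarith [sq_nonneg (c j0 - t), hs2pos j0, hlt j hj]
    have h2 : c j0 * (c j - c j0) * 2 ≤ 2 * t * (c j - c j0) := by
      nlinarith [hlt j hj]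
    have hq' : q * ((c j0 - t)^2 + s j0^2)
        = ((c j0 - t)^2 + s j0^2) - c j0 * gap * ((c j0 - t)^2 + s j0^2) := by
      rw [hqdef]; ring
    linarith
  have hkeyE : ∀ t, c j0 ≤ t → t ≤ 1 → (1 - t)^2 ≤ q * ((c j0 - t)^2 + s j0^2) := by
    intro t ht1 ht2
    have hid : (c j0 - t)^2 + s j0^2 - (1 - t)^2 = 2*t*(1 - c j0) := by
      linear_combination hcs j0
    have hg2 : (c j0 - t)^2 + s j0^2 ≤ 2 := by nlinarith [hs2le1 j0]
    have h1 : c j0 * gap * ((c j0 - t)^2 + s j0^2) ≤ c j0 * (1 - c j0) * 2 := by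
      nlinarith [sq_nonneg (c j0 - t), hs2pos j0]
    have h2 : c j0 * (1 - c j0) * 2 ≤ 2 * t * (1 - c j0) := by nlinarith
    have hq' : q * ((c j0 - t)^2 + s j0^2)
        = ((c j0 - t)^2 + s j0^2) - c j0 * gap * ((c j0 - t)^2 + s j0^2) := by
      rw [hqdef]; ring
    linarith
  have hglow : ∀ t : ℝ, s j0^2 ≤ (c j0 - t)^2 + s j0^2 := fun t => by nlinarith [sq_nonneg (c j0 - t)]
  -- abbreviations
  have hsubc : ∀ (u u' : EuclideanSpace ℝ ((Fin m × Fin 2) ⊕ Fin e)) (r : ℝ)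
      (i : (Fin m × Fin 2) ⊕ Fin e), (u - r • u') i = u i - r * u' i := fun _ _ _ _ => rfl
  have hsmulc : ∀ (u : EuclideanSpace ℝ ((Fin m × Fin 2) ⊕ Fin e)) (r : ℝ)
      (i : (Fin m × Fin 2) ⊕ Fin e), (r • u) i = r * u i := fun _ _ _ => rfl
  -- the one-step analysis
  have step : ∀ k, ‖v k‖ = 1 → 0 < ACIAux.Pb (v k) j0 →
      (c j0 ≤ α k ∧ α k ≤ 1 ∧ α k - c j0 ≤ ACIAux.Sb j0 (v k)) ∧
      (c j0 ≤ β k ∧ β k ≤ 1 ∧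
        s j0^2 * ACIAux.Pb (v k) j0 * (β k - c j0) ≤ 2 * ACIAux.Sb j0 (v k)) ∧
      ∃ τ : ℝ, 0 < τ ∧
        (∀ j, v (k+1) (Sum.inl (j,0)) =
            τ * ((((c j - α k)*(c j - β k) + s j^2) * v k (Sum.inl (j,0))
                 - (s j * (β k - α k)) * v k (Sum.inl (j,1)))) ∧
             v (k+1) (Sum.inl (j,1)) =
            τ * (((s j * (β k - α k)) * v k (Sum.inl (j,0))
                 + ((c j - α k)*(c j - β k) + s j^2) * v k (Sum.inl (j,1))))) ∧
        (∀ i : Fin e, v (k+1) (Sum.inr i) = τ * ((1 - α k) * (1 - β k)) * v k (Sum.inr i)) ∧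
        ‖v (k+1)‖ = 1 ∧
        (∀ j, ACIAux.Pb (v (k+1)) j
            = τ^2 * (((c j - α k)^2 + s j^2) * ((c j - β k)^2 + s j^2)) * ACIAux.Pb (v k) j) ∧
        ACIAux.Eb (v (k+1)) = τ^2 * ((1 - α k)^2 * (1 - β k)^2) * ACIAux.Eb (v k) := by
    intro k h1 h2
    -- Rayleigh bounds for α
    have hrayα := ACIAux.rayleigh (e := e) c j0 hcle hc00 hcle1 s (v k) h1
    rw [← hα k] at hrayα
    obtain ⟨hα1, hα2, hα3⟩ := hrayα
    -- coordinates of wt k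
    have hwt0 : ∀ j, wt k (Sum.inl (j,0))
        = (c j - α k) * v k (Sum.inl (j,0)) + s j * v k (Sum.inl (j,1)) := by
      intro j
      rw [hwt k, hsubc, ACIAux.br0]
      ring
    have hwt1 : ∀ j, wt k (Sum.inl (j,1))
        = -(s j) * v k (Sum.inl (j,0)) + (c j - α k) * v k (Sum.inl (j,1)) := by
      intro j
      rw [hwt k, hsubc, ACIAux.br1]
      ring
    have hwte : ∀ i : Fin e, wt k (Sum.inr i) = (1 - α k) * v k (Sum.inr i) := by
      intro i
      rw [hwt k, hsubc, ACIAux.bre]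
      ring
    -- scaling of Pb/Eb under the half-step
    have hPwt : ∀ j, ACIAux.Pb (wt k) j = ((c j - α k)^2 + s j^2) * ACIAux.Pb (v k) j := by
      intro j
      unfold ACIAux.Pb
      rw [hwt0 j, hwt1 j]
      ring
    have hEwt : ACIAux.Eb (wt k) = (1 - α k)^2 * ACIAux.Eb (v k) := by
      unfold ACIAux.Eb
      rw [Finset.mul_sum]
      exact Finset.sum_congr rfl fun i _ => by rw [hwte i]; ring
    -- wt k is nonzero
    have hwtsq : s j0^2 * ACIAux.Pb (v k) j0 ≤ ‖wt k‖^2 := by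
      rw [ACIAux.norm_sq_eq j0 (wt k), hPwt j0]
      nlinarith [ACIAux.Sb_nonneg j0 (wt k), hglow (α k), h2]
    have hwtpos : 0 < ‖wt k‖ := by
      have hnn := norm_nonneg (wt k)
      nlinarith [hs2pos j0, h2]
    -- w k is a unit vector
    have hw1 : ‖w k‖ = 1 := by
      rw [hw k, norm_smul, Real.norm_eq_abs, abs_of_nonneg (inv_nonneg.mpr hwtpos.le),
        inv_mul_cancel₀ hwtpos.ne']
    -- Rayleigh bounds for β
    have hrayβ := ACIAux.rayleigh (e := e) c j0 hcle hc00 hcle1 s (w k) hw1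
    rw [← hβ k] at hrayβ
    obtain ⟨hβ1, hβ2, hβ3⟩ := hrayβ
    -- bound for Sb of w
    have hSwt : ACIAux.Sb j0 (wt k) ≤ 2 * ACIAux.Sb j0 (v k) := by
      unfold ACIAux.Sb
      have hsum : ∑ j ∈ Finset.univ.erase j0, ACIAux.Pb (wt k) j
          ≤ ∑ j ∈ Finset.univ.erase j0, 2 * ACIAux.Pb (v k) j := by
        refine Finset.sum_le_sum fun j _ => ?_
        rw [hPwt j]
        have hgj : (c j - α k)^2 + s j^2 ≤ 2 := by
          nlinarith [hs2le1 j, hc0 j, hc1 j, hα1, hα2, hcle j]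
        nlinarith [ACIAux.Pb_nonneg (v k) j]
      rw [hEwt]
      have h1a : (1 - α k)^2 ≤ 1 := by nlinarith
      have hEb2 : (1 - α k)^2 * ACIAux.Eb (v k) ≤ 2 * ACIAux.Eb (v k) := by
        nlinarith [ACIAux.Eb_nonneg (v k), h1a]
      have h2' : 2 * ((∑ j ∈ Finset.univ.erase j0, ACIAux.Pb (v k) j) + ACIAux.Eb (v k))
          = (∑ j ∈ Finset.univ.erase j0, 2 * ACIAux.Pb (v k) j) + 2 * ACIAux.Eb (v k) := by
        rw [mul_add, Finset.mul_sum]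
      linarith
    have hSw : ‖wt k‖^2 * ACIAux.Sb j0 (w k) = ACIAux.Sb j0 (wt k) := by
      rw [hw k, ACIAux.Sb_smul]
      have : (‖wt k‖⁻¹)^2 * ACIAux.Sb j0 (wt k) * ‖wt k‖^2
          = (‖wt k‖⁻¹ * ‖wt k‖)^2 * ACIAux.Sb j0 (wt k) := by ring
      field_simp
    have hβmul : s j0^2 * ACIAux.Pb (v k) j0 * (β k - c j0) ≤ 2 * ACIAux.Sb j0 (v k) := by
      have hb0 : 0 ≤ β k - c j0 := by linarith
      have step1 : s j0^2 * ACIAux.Pb (v k) j0 * (β k - c j0) ≤ ‖wt k‖^2 * (β k - c j0) :=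
        mul_le_mul_of_nonneg_right hwtsq hb0
      have step2 : ‖wt k‖^2 * (β k - c j0) ≤ ‖wt k‖^2 * ACIAux.Sb j0 (w k) :=
        mul_le_mul_of_nonneg_left hβ3 (by positivity)
      calc s j0^2 * ACIAux.Pb (v k) j0 * (β k - c j0) ≤ ‖wt k‖^2 * ACIAux.Sb j0 (w k) :=
            le_trans step1 step2
        _ = ACIAux.Sb j0 (wt k) := hSw
        _ ≤ 2 * ACIAux.Sb j0 (v k) := hSwt
    -- coordinates of vt (k+1)
    have hvt0 : ∀ j, vt (k+1) (Sum.inl (j,0))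
        = ‖wt k‖⁻¹ * (((c j - α k)*(c j - β k) + s j^2) * v k (Sum.inl (j,0))
            - (s j * (β k - α k)) * v k (Sum.inl (j,1))) := by
      intro j
      rw [hvt k, hsubc, ACIAux.brT0]
      simp only [hw k, hsmulc, hwt0, hwt1]
      ring
    have hvt1 : ∀ j, vt (k+1) (Sum.inl (j,1))
        = ‖wt k‖⁻¹ * ((s j * (β k - α k)) * v k (Sum.inl (j,0))
            + ((c j - α k)*(c j - β k) + s j^2) * v k (Sum.inl (j,1))) := by
      intro j
      rw [hvt k, hsubc, ACIAux.brT1]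
      simp only [hw k, hsmulc, hwt0, hwt1]
      ring
    have hvte : ∀ i : Fin e, vt (k+1) (Sum.inr i)
        = ‖wt k‖⁻¹ * ((1 - α k) * (1 - β k)) * v k (Sum.inr i) := by
      intro i
      rw [hvt k, hsubc, ACIAux.brTe]
      simp only [hw k, hsmulc, hwte]
      ring
    -- Pb of vt
    have hPvt : ∀ j, ACIAux.Pb (vt (k+1)) j
        = (‖wt k‖⁻¹)^2 * (((c j - α k)^2 + s j^2) * ((c j - β k)^2 + s j^2))
            * ACIAux.Pb (v k) j := by
      intro j
      unfold ACIAux.Pb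
      rw [hvt0 j, hvt1 j]
      ring
    have hEvt : ACIAux.Eb (vt (k+1))
        = (‖wt k‖⁻¹)^2 * ((1 - α k)^2 * (1 - β k)^2) * ACIAux.Eb (v k) := by
      unfold ACIAux.Eb
      rw [Finset.mul_sum]
      exact Finset.sum_congr rfl fun i _ => by rw [hvte i]; ring
    -- vt is nonzero
    have hvtsq : (‖wt k‖⁻¹)^2 * (s j0^2 * s j0^2) * ACIAux.Pb (v k) j0 ≤ ‖vt (k+1)‖^2 := by
      rw [ACIAux.norm_sq_eq j0 (vt (k+1)), hPvt j0]
      have hgg : s j0^2 * s j0^2 ≤ ((c j0 - α k)^2 + s j0^2) * ((c j0 - β k)^2 + s j0^2) := by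
        nlinarith [hglow (α k), hglow (β k), hs2pos j0]
      have hmm : (‖wt k‖⁻¹)^2 * (s j0^2 * s j0^2) * ACIAux.Pb (v k) j0
          ≤ (‖wt k‖⁻¹)^2 * (((c j0 - α k)^2 + s j0^2) * ((c j0 - β k)^2 + s j0^2))
            * ACIAux.Pb (v k) j0 := by
        have h' : (0:ℝ) ≤ (‖wt k‖⁻¹)^2 := by positivity
        exact mul_le_mul_of_nonneg_right (mul_le_mul_of_nonneg_left hgg h') h2.le
      nlinarith [ACIAux.Sb_nonneg j0 (vt (k+1))]
    have hvtpos : 0 < ‖vt (k+1)‖ := by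
      have hnn := norm_nonneg (vt (k+1))
      have hip : 0 < (‖wt k‖⁻¹)^2 := by positivity
      nlinarith [hs2pos j0, h2, mul_pos (mul_pos hip (mul_pos (hs2pos j0) (hs2pos j0))) h2]
    have hv1 : ‖v (k+1)‖ = 1 := by
      rw [hv k, norm_smul, Real.norm_eq_abs, abs_of_nonneg (inv_nonneg.mpr hvtpos.le),
        inv_mul_cancel₀ hvtpos.ne']
    -- final coordinates
    refine ⟨⟨hα1, hα2, hα3⟩, ⟨hβ1, hβ2, hβmul⟩,
      ‖vt (k+1)‖⁻¹ * ‖wt k‖⁻¹, by positivity, ?_, ?_, hv1, ?_, ?_⟩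
    · intro j
      constructor
      · rw [hv k, hsmulc, hvt0 j]; ring
      · rw [hv k, hsmulc, hvt1 j]; ring
    · intro i
      rw [hv k, hsmulc, hvte i]; ring
    · intro j
      unfold ACIAux.Pb
      rw [hv k, hsmulc, hsmulc, hvt0 j, hvt1 j]
      ring
    · unfold ACIAux.Eb
      rw [Finset.mul_sum]
      refine Finset.sum_congr rfl fun i _ => ?_
      rw [hv k, hsmulc, hvte i]
      ring
  -- initial block-1 mass
  have hP0 : 0 < ACIAux.Pb (v 0) j0 := by
    obtain ⟨i, hi⟩ := hblock1
    have hi' : v 0 (Sum.inl (j0, i)) ≠ 0 := by simpa using hi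
    unfold ACIAux.Pb
    fin_cases i
    · have : 0 < v 0 (Sum.inl (j0, 0)) ^ 2 := by positivity
      nlinarith [sq_nonneg (v 0 (Sum.inl (j0, 1)))]
    · have : 0 < v 0 (Sum.inl (j0, 1)) ^ 2 := by positivity
      nlinarith [sq_nonneg (v 0 (Sum.inl (j0, 0)))]
  set C0 : ℝ := ACIAux.Sb j0 (v 0) / ACIAux.Pb (v 0) j0 with hC0def
  have hC0nn : 0 ≤ C0 := div_nonneg (ACIAux.Sb_nonneg j0 (v 0)) hP0.le
  -- the main invariant
  have inv : ∀ k, ‖v k‖ = 1 ∧ 0 < ACIAux.Pb (v k) j0 ∧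
      ACIAux.Sb j0 (v k) ≤ C0 * q^(2*k) * ACIAux.Pb (v k) j0 := by
    intro k
    induction k with
    | zero =>
      refine ⟨hv0, hP0, le_of_eq ?_⟩
      have : C0 * q ^ (2*0) * ACIAux.Pb (v 0) j0 = ACIAux.Sb j0 (v 0) := by
        rw [hC0def]
        norm_num
        field_simp
      exact this.symm
    | succ k ih =>
      obtain ⟨h1, h2, h3⟩ := ih
      obtain ⟨⟨hα1, hα2, hα3⟩, ⟨hβ1, hβ2, hβm⟩, τ, hτ, hco, hcoe, hv1, hPs, hEs⟩ := step k h1 h2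
      have hg0α := hglow (α k)
      have hg0β := hglow (β k)
      have hG0pos : 0 < ((c j0 - α k)^2 + s j0^2) * ((c j0 - β k)^2 + s j0^2) :=
        mul_pos (lt_of_lt_of_le (hs2pos j0) hg0α) (lt_of_lt_of_le (hs2pos j0) hg0β)
      have hPk1pos : 0 < ACIAux.Pb (v (k+1)) j0 := by
        rw [hPs j0]
        exact mul_pos (mul_pos (by positivity) hG0pos) h2
      have hqG : ∀ j, j ≠ j0 → ((c j - α k)^2 + s j^2) * ((c j - β k)^2 + s j^2)
          ≤ q^2 * (((c j0 - α k)^2 + s j0^2) * ((c j0 - β k)^2 + s j0^2)) := by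
        intro j hj
        have k1 := hkey (α k) hα1 hα2 j hj
        have k2 := hkey (β k) hβ1 hβ2 j hj
        have n2 : (0:ℝ) ≤ (c j - β k)^2 + s j^2 := by positivity
        have n3 : (0:ℝ) ≤ q * ((c j0 - α k)^2 + s j0^2) := by
          positivity
        calc ((c j - α k)^2 + s j^2) * ((c j - β k)^2 + s j^2)
            ≤ (q * ((c j0 - α k)^2 + s j0^2)) * (q * ((c j0 - β k)^2 + s j0^2)) :=
              mul_le_mul k1 k2 n2 n3
          _ = q^2 * (((c j0 - α k)^2 + s j0^2) * ((c j0 - β k)^2 + s j0^2)) := by ring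
      have hqE : (1 - α k)^2 * (1 - β k)^2
          ≤ q^2 * (((c j0 - α k)^2 + s j0^2) * ((c j0 - β k)^2 + s j0^2)) := by
        have k1 := hkeyE (α k) hα1 hα2
        have k2 := hkeyE (β k) hβ1 hβ2
        have n2 : (0:ℝ) ≤ (1 - β k)^2 := by positivity
        have n3 : (0:ℝ) ≤ q * ((c j0 - α k)^2 + s j0^2) := by positivity
        calc (1 - α k)^2 * (1 - β k)^2
            ≤ (q * ((c j0 - α k)^2 + s j0^2)) * (q * ((c j0 - β k)^2 + s j0^2)) :=
              mul_le_mul k1 k2 n2 n3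
          _ = q^2 * (((c j0 - α k)^2 + s j0^2) * ((c j0 - β k)^2 + s j0^2)) := by ring
      have hτ2 : (0:ℝ) ≤ τ^2 := by positivity
      have hsum : ∑ j ∈ Finset.univ.erase j0, ACIAux.Pb (v (k+1)) j
          ≤ ∑ j ∈ Finset.univ.erase j0,
              (τ^2 * (q^2 * (((c j0 - α k)^2 + s j0^2) * ((c j0 - β k)^2 + s j0^2))))
                * ACIAux.Pb (v k) j := by
        refine Finset.sum_le_sum fun j hj => ?_
        have hj' : j ≠ j0 := (Finset.mem_erase.mp hj).1
        rw [hPs j]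
        exact mul_le_mul_of_nonneg_right
          (mul_le_mul_of_nonneg_left (hqG j hj') hτ2) (ACIAux.Pb_nonneg (v k) j)
      have hEb' : ACIAux.Eb (v (k+1))
          ≤ (τ^2 * (q^2 * (((c j0 - α k)^2 + s j0^2) * ((c j0 - β k)^2 + s j0^2))))
              * ACIAux.Eb (v k) := by
        rw [hEs]
        exact mul_le_mul_of_nonneg_right
          (mul_le_mul_of_nonneg_left hqE hτ2) (ACIAux.Eb_nonneg (v k))
      have hfactor : ∑ j ∈ Finset.univ.erase j0,
            (τ^2 * (q^2 * (((c j0 - α k)^2 + s j0^2) * ((c j0 - β k)^2 + s j0^2))))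
              * ACIAux.Pb (v k) j
          = (τ^2 * (q^2 * (((c j0 - α k)^2 + s j0^2) * ((c j0 - β k)^2 + s j0^2))))
              * ∑ j ∈ Finset.univ.erase j0, ACIAux.Pb (v k) j := by
        rw [Finset.mul_sum]
      have hSb1 : ACIAux.Sb j0 (v (k+1))
          ≤ (τ^2 * (q^2 * (((c j0 - α k)^2 + s j0^2) * ((c j0 - β k)^2 + s j0^2))))
              * ACIAux.Sb j0 (v k) := by
        have hsum' := hsum
        rw [hfactor] at hsum'
        unfold ACIAux.Sb
        rw [mul_add]
        linarith
      have hchain : (τ^2 * (q^2 * (((c j0 - α k)^2 + s j0^2) * ((c j0 - β k)^2 + s j0^2))))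
            * ACIAux.Sb j0 (v k)
          ≤ (τ^2 * (q^2 * (((c j0 - α k)^2 + s j0^2) * ((c j0 - β k)^2 + s j0^2))))
            * (C0 * q^(2*k) * ACIAux.Pb (v k) j0) :=
        mul_le_mul_of_nonneg_left h3 (by positivity)
      refine ⟨hv1, hPk1pos, ?_⟩
      have hid : (τ^2 * (q^2 * (((c j0 - α k)^2 + s j0^2) * ((c j0 - β k)^2 + s j0^2))))
            * (C0 * q^(2*k) * ACIAux.Pb (v k) j0)
          = C0 * q^(2*(k+1)) * ACIAux.Pb (v (k+1)) j0 := by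
        rw [hPs j0]
        rw [show 2*(k+1) = 2*k + 2 by ring, pow_add]
        ring
      linarith
  -- consequences of the invariant
  have hPble1 : ∀ k, ACIAux.Pb (v k) j0 ≤ 1 := by
    intro k
    have hn := ACIAux.norm_sq_eq j0 (v k)
    rw [(inv k).1] at hn
    norm_num at hn
    linarith [ACIAux.Sb_nonneg j0 (v k)]
  have hPbSb : ∀ k, ACIAux.Pb (v k) j0 = 1 - ACIAux.Sb j0 (v k) := by
    intro k
    have hn := ACIAux.norm_sq_eq j0 (v k)
    rw [(inv k).1] at hn
    norm_num at hn
    linarith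
  have hSbk : ∀ k, ACIAux.Sb j0 (v k) ≤ C0 * q^(2*k) := by
    intro k
    refine le_trans (inv k).2.2 ?_
    have : C0 * q^(2*k) * ACIAux.Pb (v k) j0 ≤ C0 * q^(2*k) * 1 :=
      mul_le_mul_of_nonneg_left (hPble1 k) (by positivity)
    linarith
  -- choose K beyond which the tail mass is at most 1/2
  obtain ⟨K, hK⟩ : ∃ K : ℕ, C0 * q^(2*K) ≤ 1/2 := by
    obtain ⟨n, hn⟩ := exists_pow_lt_of_lt_one
      (show (0:ℝ) < 1/(2*(C0+1)) by positivity) hq1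
    refine ⟨n, ?_⟩
    have h2n : q^(2*n) ≤ q^n := pow_le_pow_of_le_one hq0.le hqle1 (by omega)
    have hmul : C0 * q^(2*n) ≤ C0 * (1/(2*(C0+1))) :=
      mul_le_mul_of_nonneg_left (le_trans h2n hn.le) hC0nn
    have hfrac : C0 * (1/(2*(C0+1))) ≤ 1/2 := by
      rw [mul_one_div, div_le_div_iff₀ (by positivity) (by norm_num)]
      linarith only [hC0nn]
    linarith
  -- constants for the difference estimate
  set T0 : ℝ := 75 * C0^2 / (s j0^2)^3 with hT0def
  have hT0nn : 0 ≤ T0 := by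
    rw [hT0def]
    positivity
  set C9 : ℝ := (4*C0 + T0)^2 + T0 + 4*C0 + 1 with hC9def
  have hC9pos : (0:ℝ) < C9 := by
    rw [hC9def]
    positivity
  -- the key difference estimate
  have hdiff : ∀ k, K ≤ k → ‖v (k+1) - v k‖^2 ≤ C9 * q^(2*k) := by
    intro k hk
    obtain ⟨h1, h2, h3⟩ := inv k
    obtain ⟨h1', h2', h3'⟩ := inv (k+1)
    obtain ⟨⟨hα1, hα2, hα3⟩, ⟨hβ1, hβ2, hβm⟩, τ, hτ, hco, hcoe, hv1, hPs, hEs⟩ := step k h1 h2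
    obtain ⟨ε, hεdef⟩ : ∃ x : ℝ, x = C0 * q^(2*k) := ⟨_, rfl⟩
    have hεnn : 0 ≤ ε := by rw [hεdef]; positivity
    have hqmono : q^(2*k) ≤ q^(2*K) := pow_le_pow_of_le_one hq0.le hqle1 (by omega)
    have hq2k1 : q^(2*k) ≤ 1 := pow_le_one₀ hq0.le hqle1
    have hq2knn : (0:ℝ) ≤ q^(2*k) := pow_nonneg hq0.le _
    have hε12 : ε ≤ 1/2 := by
      rw [hεdef]
      exact le_trans (mul_le_mul_of_nonneg_left hqmono hC0nn) hK
    have hSk : ACIAux.Sb j0 (v k) ≤ ε := by rw [hεdef]; exact hSbk k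
    have hSk1 : ACIAux.Sb j0 (v (k+1)) ≤ ε := by
      rw [hεdef]
      refine le_trans (hSbk (k+1)) ?_
      exact mul_le_mul_of_nonneg_left (pow_le_pow_of_le_one hq0.le hqle1 (by omega)) hC0nn
    have hPkeq := hPbSb k
    have hPk1eq := hPbSb (k+1)
    have hPklo : 1/2 ≤ ACIAux.Pb (v k) j0 := by linarith
    have hSknn := ACIAux.Sb_nonneg j0 (v k)
    have hSk1nn := ACIAux.Sb_nonneg j0 (v (k+1))
    -- scalar quantities
    obtain ⟨p0, hp0def⟩ : ∃ x : ℝ, x = (c j0 - α k)*(c j0 - β k) + s j0^2 := ⟨_, rfl⟩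
    obtain ⟨q0, hq0def'⟩ : ∃ x : ℝ, x = s j0 * (β k - α k) := ⟨_, rfl⟩
    have hG0eq : ((c j0 - α k)^2 + s j0^2) * ((c j0 - β k)^2 + s j0^2) = p0^2 + q0^2 := by
      rw [hp0def, hq0def']; ring
    -- bounds on the Rayleigh shifts
    have ha0 : 0 ≤ α k - c j0 := by linarith
    have haε : α k - c j0 ≤ ε := by linarith
    have hb0 : 0 ≤ β k - c j0 := by linarith
    have hbσ : s j0^2 * (β k - c j0) ≤ 4*ε := by
      nlinarith only [mul_nonneg (hs2pos j0).le hb0, hβm, hSk, hPklo]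
    -- bounds on p0
    have hp0lo : s j0^2 ≤ p0 := by
      rw [hp0def]
      nlinarith only [mul_nonneg ha0 hb0]
    have hp0pos : 0 < p0 := lt_of_lt_of_le (hs2pos j0) hp0lo
    -- bounds on R := τ^2 (p0^2+q0^2)
    obtain ⟨R, hRdef⟩ : ∃ x : ℝ, x = τ^2 * (p0^2 + q0^2) := ⟨_, rfl⟩
    have hRP' : R * ACIAux.Pb (v k) j0 = ACIAux.Pb (v (k+1)) j0 := by
      rw [hRdef, hPs j0, hG0eq]
    have hRhi : R - 1 ≤ 4*ε := by
      nlinarith only [hRP', hPklo, hPkeq, hPk1eq, hSk, hSk1, hSknn, hSk1nn, hε12]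
    have hRlo : 1 - 4*ε ≤ R := by
      nlinarith only [hRP', hPklo, hPkeq, hPk1eq, hSk, hSk1, hSknn, hSk1nn, hε12]
    have hR3 : R ≤ 3 := by linarith
    -- bound on (τ q0)^2
    have hτσ : τ^2 * (s j0^2)^2 ≤ R := by
      have h' : τ^2 * (s j0^2 * s j0^2) ≤ τ^2 * (p0 * p0) :=
        mul_le_mul_of_nonneg_left
          (mul_self_le_mul_self (hs2pos j0).le hp0lo) (by positivity : (0:ℝ) ≤ τ^2)
      rw [hRdef]
      nlinarith only [h', mul_nonneg (by positivity : (0:ℝ) ≤ τ^2) (sq_nonneg q0)]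
    have hτσ3 : τ^2 * (s j0^2)^2 ≤ 3 := le_trans hτσ hR3
    have hsb1 : (s j0^2 * ((β k - c j0) - (α k - c j0)))^2 ≤ 25*ε^2 := by
      have hσa : s j0^2 * (α k - c j0) ≤ ε := by
        linarith only [mul_nonneg (sub_nonneg.mpr (hs2le1 j0)) ha0, haε]
      have h1' : s j0^2 * ((β k - c j0) - (α k - c j0)) ≤ 5*ε := by
        linarith only [hbσ, mul_nonneg (hs2pos j0).le ha0, hεnn]
      have h2' : -(5*ε) ≤ s j0^2 * ((β k - c j0) - (α k - c j0)) := by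
        linarith only [hσa, mul_nonneg (hs2pos j0).le hb0, hεnn]
      nlinarith only [h1', h2', hεnn]
    have hTσ : (τ*q0)^2 * (s j0^2)^3 ≤ 75*ε^2 := by
      have hrw : (τ*q0)^2 * (s j0^2)^3
          = (τ^2*(s j0^2)^2) * ((s j0^2*((β k - c j0) - (α k - c j0)))^2) := by
        rw [hq0def']; ring
      rw [hrw]
      have hY : (0:ℝ) ≤ (s j0^2*((β k - c j0) - (α k - c j0)))^2 := sq_nonneg _
      have h3Y := mul_le_mul_of_nonneg_right hτσ3 hY
      have h25 := mul_le_mul_of_nonneg_left hsb1 (by norm_num : (0:ℝ) ≤ 3)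
      linarith
    have hσ3 : (0:ℝ) < (s j0^2)^3 := pow_pos (hs2pos j0) 3
    have hT : (τ*q0)^2 ≤ T0 * q^(2*k) := by
      have h4 : (q^(2*k))^2 ≤ q^(2*k) := by nlinarith only [hq2knn, hq2k1]
      have hε2 : 75*ε^2 ≤ 75*C0^2*q^(2*k) := by
        have : 75*ε^2 = 75*C0^2*(q^(2*k))^2 := by rw [hεdef]; ring
        rw [this]
        have := mul_le_mul_of_nonneg_left h4 (by positivity : (0:ℝ) ≤ 75*C0^2)
        linarith
      have hchain : (τ*q0)^2 * (s j0^2)^3 ≤ 75*C0^2*q^(2*k) := le_trans hTσ hε2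
      have hdd : (τ*q0)^2 ≤ 75*C0^2*q^(2*k) / (s j0^2)^3 := (le_div_iff₀ hσ3).mpr hchain
      rw [hT0def]
      calc (τ*q0)^2 ≤ 75*C0^2*q^(2*k) / (s j0^2)^3 := hdd
        _ = 75*C0^2/(s j0^2)^3 * q^(2*k) := by ring
    -- bound on τ p0 - 1
    obtain ⟨x, hxdef⟩ : ∃ y : ℝ, y = τ*p0 := ⟨_, rfl⟩
    have hxnn : 0 ≤ x := by rw [hxdef]; exact (mul_pos hτ hp0pos).le
    have hx2 : x^2 = R - (τ*q0)^2 := by rw [hxdef, hRdef]; ring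
    have hM : (0:ℝ) ≤ 4*ε + T0*q^(2*k) := by positivity
    have hx2hi : x^2 - 1 ≤ 4*ε := by
      rw [hx2]; linarith only [hRhi, sq_nonneg (τ*q0)]
    have hx2lo : -(4*ε + T0*q^(2*k)) ≤ x^2 - 1 := by rw [hx2]; linarith
    have hx1 : (x-1)^2 ≤ (x^2-1)^2 := by
      nlinarith only [sq_nonneg (x-1), sq_nonneg (x+1), sq_nonneg x,
        mul_nonneg (sq_nonneg (x-1)) hxnn, hxnn]
    have hx2abs : (x^2-1)^2 ≤ (4*ε + T0*q^(2*k))^2 := by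
      nlinarith only [hx2hi, hx2lo, hM, mul_nonneg hT0nn hq2knn]
    have hxb : (x-1)^2 ≤ (4*ε + T0*q^(2*k))^2 := le_trans hx1 hx2abs
    -- the difference vector blockwise
    have hsub : ∀ (u u' : EuclideanSpace ℝ ((Fin m × Fin 2) ⊕ Fin e))
        (i : (Fin m × Fin 2) ⊕ Fin e), (u - u') i = u i - u' i := fun _ _ _ => rfl
    have hPdiff : ACIAux.Pb (v (k+1) - v k) j0 = ((x - 1)^2 + (τ*q0)^2) * ACIAux.Pb (v k) j0 := by
      unfold ACIAux.Pb
      rw [hsub, hsub, (hco j0).1, (hco j0).2, hxdef, hp0def, hq0def']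
      ring
    have hnd : ‖v (k+1) - v k‖^2
        = ACIAux.Pb (v (k+1) - v k) j0 + ACIAux.Sb j0 (v (k+1) - v k) :=
      ACIAux.norm_sq_eq j0 _
    have hSd : ACIAux.Sb j0 (v (k+1) - v k) ≤ 4*ε := by
      have := ACIAux.Sb_sub_le j0 (v (k+1)) (v k)
      linarith
    have hPd : ACIAux.Pb (v (k+1) - v k) j0 ≤ (x-1)^2 + (τ*q0)^2 := by
      rw [hPdiff]
      have h' := mul_le_mul_of_nonneg_left (hPble1 k)
        (add_nonneg (sq_nonneg (x-1)) (sq_nonneg (τ*q0)))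
      linarith
    -- assemble
    have hflat : 4*ε + T0*q^(2*k) = (4*C0 + T0)*q^(2*k) := by rw [hεdef]; ring
    have hsq : ((4*C0+T0)*q^(2*k))^2 ≤ (4*C0+T0)^2 * q^(2*k) := by
      have h4 : (q^(2*k))^2 ≤ q^(2*k) := by nlinarith only [hq2knn, hq2k1]
      calc ((4*C0+T0)*q^(2*k))^2 = (4*C0+T0)^2*(q^(2*k))^2 := by ring
        _ ≤ (4*C0+T0)^2 * q^(2*k) := mul_le_mul_of_nonneg_left h4 (by positivity)
    have hεq : 4*ε = 4*C0*q^(2*k) := by rw [hεdef]; ring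
    have hRHS : C9 * q^(2*k)
        = (4*C0+T0)^2*q^(2*k) + T0*q^(2*k) + 4*C0*q^(2*k) + q^(2*k) := by
      rw [hC9def]; ring
    rw [hnd]
    rw [hflat] at hxb
    linarith only [hxb, hsq, hT, hSd, hPd, hεq, hq2knn, hRHS]
  -- from squared bound to norm bound
  have hC9nn : (0:ℝ) ≤ C9 := hC9pos.le
  have hnorm : ∀ k, K ≤ k → ‖v (k+1) - v k‖ ≤ Real.sqrt C9 * q^k := by
    intro k hk
    have h1 : ‖v (k+1) - v k‖ = Real.sqrt (‖v (k+1) - v k‖^2) :=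
      (Real.sqrt_sq (norm_nonneg _)).symm
    rw [h1]
    refine le_trans (Real.sqrt_le_sqrt (hdiff k hk)) ?_
    rw [Real.sqrt_mul hC9nn]
    have h2 : q^(2*k) = (q^k)^2 := by rw [← pow_mul, mul_comm]
    rw [h2, Real.sqrt_sq (pow_nonneg hq0.le k)]
  -- pick the rate ρ and the final threshold
  set ρ : ℝ := (1+q)/2 with hρdef
  have hρ0 : 0 < ρ := by rw [hρdef]; linarith
  have hρ1 : ρ < 1 := by rw [hρdef]; linarith
  have hqρ : q < ρ := by rw [hρdef]; linarith
  have hdiv1 : q/ρ < 1 := by rw [div_lt_one hρ0]; exact hqρ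
  have hdivnn : 0 ≤ q/ρ := div_nonneg hq0.le hρ0.le
  obtain ⟨N, hN⟩ := exists_pow_lt_of_lt_one
    (show (0:ℝ) < Real.sqrt 3/(Real.sqrt C9 + 1) by positivity) hdiv1
  have hfin : ∀ k ≥ max K N, ‖v (k+1) - v k‖ ≤ Real.sqrt 3 * ρ^k := by
    intro k hk
    have hk1 : K ≤ k := le_trans (le_max_left _ _) hk
    have hk2 : N ≤ k := le_trans (le_max_right _ _) hk
    have hρknn : (0:ℝ) ≤ ρ^k := pow_nonneg hρ0.le k
    have hq_eq : q^k = (q/ρ)^k * ρ^k := by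
      rw [← mul_pow, div_mul_cancel₀ _ hρ0.ne']
    have hmono : (q/ρ)^k ≤ (q/ρ)^N := pow_le_pow_of_le_one hdivnn hdiv1.le hk2
    have h3 : Real.sqrt C9 * (q/ρ)^k ≤ Real.sqrt C9 * (q/ρ)^N :=
      mul_le_mul_of_nonneg_left hmono (Real.sqrt_nonneg _)
    have h4 : Real.sqrt C9 * (q/ρ)^N ≤ Real.sqrt C9 * (Real.sqrt 3/(Real.sqrt C9 + 1)) :=
      mul_le_mul_of_nonneg_left hN.le (Real.sqrt_nonneg _)
    have h5 : Real.sqrt C9 * (Real.sqrt 3/(Real.sqrt C9 + 1)) ≤ Real.sqrt 3 := by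
      rw [mul_div_assoc', div_le_iff₀ (by positivity : (0:ℝ) < Real.sqrt C9 + 1)]
      nlinarith only [Real.sqrt_nonneg (3:ℝ), Real.sqrt_nonneg C9]
    have h6 : Real.sqrt C9 * (q/ρ)^k ≤ Real.sqrt 3 := by linarith only [h3, h4, h5]
    calc ‖v (k+1) - v k‖ ≤ Real.sqrt C9 * q^k := hnorm k hk1
      _ = Real.sqrt C9 * (q/ρ)^k * ρ^k := by rw [hq_eq]; ring
      _ ≤ Real.sqrt 3 * ρ^k := mul_le_mul_of_nonneg_right h6 hρknn
  -- summability
  have hsummg : Summable (fun k : ℕ => Real.sqrt 3 * ρ^k) :=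
    (summable_geometric_of_lt_one hρ0.le hρ1).mul_left _
  have hsum : Summable (fun k => ‖v (k+1) - v k‖) := by
    refine Summable.of_norm_bounded_eventually hsummg ?_
    rw [Nat.cofinite_eq_atTop]
    filter_upwards [eventually_ge_atTop (max K N)] with k hk
    rw [Real.norm_eq_abs, abs_of_nonneg (norm_nonneg _)]
    exact hfin k hk
  -- convergence
  have hcauchy : CauchySeq v := by
    apply cauchySeq_of_summable_dist
    have heq : (fun n => dist (v n) (v (n+1))) = fun n => ‖v (n+1) - v n‖ :=
      funext fun n => by rw [dist_eq_norm, norm_sub_rev]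
    rw [heq]
    exact hsum
  obtain ⟨vstar, hvstar⟩ := cauchySeq_tendsto_of_complete hcauchy
  exact ⟨⟨vstar, hvstar⟩, ⟨ρ, hρ0, hρ1, max K N, hfin⟩, hsum⟩
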